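/- Let G be a countable discrete group equipped with counting measure, let γ > 0, and let μ_k, ν_k : G → ℂ (k ∈ ℕ) be finitely supported functions. Assume: (i) the maximal operator f ↦ sup_k (|f| * |ν_k|) is of weak type (1,1) on G; (ii) there is C < ∞ with |support(μ_k)| ≤ C·2^{kγ} for all k; (iii) there is C < ∞ with ‖f * (μ_k − ν_k)‖_{ℓ²} ≤ C·2^{−kγ/2} ‖f‖_{ℓ²} for all f ∈ ℓ²(G) and all k. Then the maximal operator f ↦ sup_{k∈ℕ} |f * μ_k| is of weak type (1,1) on G. -/

import Mathlib

set_option maxHeartbeats 2000000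

open Finset

section Aux

private lemma tail_geom_bound {q : ℝ} (hq0 : 0 < q) (hq1 : q < 1) (r : ℝ) (hr : 0 < r)
    (K : Finset ℕ) (hK : ∀ k ∈ K, q ^ k ≤ r⁻¹) :
    ∑ k ∈ K, q ^ k ≤ r⁻¹ * (1 - q)⁻¹ := by
  have hq' : (0:ℝ) < 1 - q := by linarith
  rcases K.eq_empty_or_nonempty with rfl | hne
  · simp; positivity
  · set k₀ := K.min' hne with hk₀
    have hsub : K ⊆ Finset.Ico k₀ (K.max' hne + 1) := by
      intro k hk
      simp only [Finset.mem_Ico]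
      exact ⟨K.min'_le k hk, Nat.lt_succ_of_le (K.le_max' k hk)⟩
    have h1 : ∑ k ∈ K, q ^ k ≤ ∑ k ∈ Finset.Ico k₀ (K.max' hne + 1), q ^ k :=
      Finset.sum_le_sum_of_subset_of_nonneg hsub (fun i _ _ => by positivity)
    have h2 : ∑ k ∈ Finset.Ico k₀ (K.max' hne + 1), q ^ k
        = (q ^ (K.max' hne + 1) - q ^ k₀) / (q - 1) :=
      geom_sum_Ico hq1.ne (Nat.le_succ_of_le (K.min'_le _ (K.max'_mem hne)))
    have heq : (q ^ (K.max' hne + 1) - q ^ k₀) / (q - 1)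
        = (q ^ k₀ - q ^ (K.max' hne + 1)) * (1 - q)⁻¹ := by
      rw [div_eq_mul_inv]
      rw [show q - 1 = -(1 - q) by ring, inv_neg]; ring
    have h3 : (q ^ k₀ - q ^ (K.max' hne + 1)) * (1 - q)⁻¹ ≤ q ^ k₀ * (1 - q)⁻¹ := by
      apply mul_le_mul_of_nonneg_right _ (by positivity)
      have : (0:ℝ) ≤ q ^ (K.max' hne + 1) := by positivity
      linarith
    have h4 : q ^ k₀ ≤ r⁻¹ := hK k₀ (K.min'_mem hne)
    calc ∑ k ∈ K, q ^ k ≤ (q ^ (K.max' hne + 1) - q ^ k₀) / (q - 1) := h2 ▸ h1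
      _ = (q ^ k₀ - q ^ (K.max' hne + 1)) * (1 - q)⁻¹ := heq
      _ ≤ q ^ k₀ * (1 - q)⁻¹ := h3
      _ ≤ r⁻¹ * (1 - q)⁻¹ := mul_le_mul_of_nonneg_right h4 (by positivity)

private lemma level_set_card {G : Type*} (h : ℕ → G → ℂ) (B : ℕ → ℝ) (M β : ℝ) (hβ : 0 < β)
    (hsum : ∀ k, Summable (fun x => ‖h k x‖ ^ 2))
    (hB : ∀ k, ∑' x, ‖h k x‖ ^ 2 ≤ B k)
    (hM : ∀ K : Finset ℕ, ∑ k ∈ K, B k ≤ M) :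
    ∃ hfin : {x : G | ∃ k, β < ‖h k x‖}.Finite,
      ((hfin.toFinset.card : ℝ)) ≤ M / β ^ 2 := by
  classical
  set S := {x : G | ∃ k, β < ‖h k x‖} with hS
  have key : ∀ F : Finset G, ↑F ⊆ S → (F.card : ℝ) * β ^ 2 ≤ M := by
    intro F hF
    have hch : ∀ x : G, ∃ k, x ∈ F → β < ‖h k x‖ := by
      intro x
      by_cases hx : x ∈ F
      · obtain ⟨k, hk⟩ := hF hx
        exact ⟨k, fun _ => hk⟩
      · exact ⟨0, fun hc => absurd hc hx⟩
    choose κ hκ using hch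
    have h1 : (F.card : ℝ) * β ^ 2 ≤ ∑ x ∈ F, ‖h (κ x) x‖ ^ 2 := by
      have he : (F.card : ℝ) * β ^ 2 = ∑ _x ∈ F, β ^ 2 := by
        rw [Finset.sum_const, nsmul_eq_mul]
      rw [he]
      exact Finset.sum_le_sum fun x hx => pow_le_pow_left₀ hβ.le (hκ x hx).le 2
    have h2 : ∑ x ∈ F, ‖h (κ x) x‖ ^ 2
        = ∑ j ∈ F.image κ, ∑ x ∈ F.filter (fun x => κ x = j), ‖h (κ x) x‖ ^ 2 :=
      (Finset.sum_fiberwise_of_maps_to (fun x hx => Finset.mem_image_of_mem κ hx) _).symm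
    have h3 : ∀ j ∈ F.image κ, ∑ x ∈ F.filter (fun x => κ x = j), ‖h (κ x) x‖ ^ 2 ≤ B j := by
      intro j _
      have he : ∑ x ∈ F.filter (fun x => κ x = j), ‖h (κ x) x‖ ^ 2
          = ∑ x ∈ F.filter (fun x => κ x = j), ‖h j x‖ ^ 2 := by
        apply Finset.sum_congr rfl
        intro x hx
        rw [(Finset.mem_filter.1 hx).2]
      rw [he]
      calc ∑ x ∈ F.filter (fun x => κ x = j), ‖h j x‖ ^ 2
          ≤ ∑' x, ‖h j x‖ ^ 2 := Summable.sum_le_tsum _ (fun _ _ => by positivity) (hsum j)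
        _ ≤ B j := hB j
    calc (F.card : ℝ) * β ^ 2 ≤ ∑ x ∈ F, ‖h (κ x) x‖ ^ 2 := h1
      _ = _ := h2
      _ ≤ ∑ j ∈ F.image κ, B j := Finset.sum_le_sum h3
      _ ≤ M := hM _
  have hfin : S.Finite := by
    by_contra hinf
    have hinf' : S.Infinite := hinf
    obtain ⟨F, hFS, hcard⟩ := hinf'.exists_subset_card_eq (⌈M / β ^ 2⌉₊ + 1)
    have h5 := key F hFS
    rw [hcard] at h5
    have h6 : ((⌈M / β ^ 2⌉₊ + 1 : ℕ) : ℝ) ≤ M / β ^ 2 := by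
      rw [le_div_iff₀ (by positivity)]
      exact h5
    have h7 : M / β ^ 2 ≤ (⌈M / β ^ 2⌉₊ : ℝ) := Nat.le_ceil _
    push_cast at h6
    linarith
  refine ⟨hfin, ?_⟩
  rw [le_div_iff₀ (by positivity)]
  exact key hfin.toFinset (by simp)

private lemma conv_sq_summable {G : Type*} [Group G] (f : G → ℂ)
    (hf : Summable (fun x => ‖f x‖ ^ 2)) (θ : G → ℂ) (s : Finset G)
    (hθ : ∀ y ∉ s, θ y = 0) :
    Summable (fun x => ‖∑' y, f (x * y⁻¹) * θ y‖ ^ 2) := by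
  have hrep : ∀ x : G, (∑' y, f (x * y⁻¹) * θ y) = ∑ y ∈ s, f (x * y⁻¹) * θ y :=
    fun x => tsum_eq_sum (fun y hy => by rw [hθ y hy, mul_zero])
  have hbound : ∀ x : G, ‖∑' y, f (x * y⁻¹) * θ y‖ ^ 2
      ≤ (s.card : ℝ) * ∑ y ∈ s, ‖f (x * y⁻¹)‖ ^ 2 * ‖θ y‖ ^ 2 := by
    intro x
    rw [hrep]
    have step1 : ‖∑ y ∈ s, f (x * y⁻¹) * θ y‖ ≤ ∑ y ∈ s, ‖f (x * y⁻¹) * θ y‖ :=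
      norm_sum_le _ _
    have step2 : (∑ y ∈ s, ‖f (x * y⁻¹) * θ y‖) ^ 2
        ≤ (s.card : ℝ) * ∑ y ∈ s, ‖f (x * y⁻¹) * θ y‖ ^ 2 :=
      sq_sum_le_card_mul_sum_sq
    have step3 : ∀ y ∈ s, ‖f (x * y⁻¹) * θ y‖ ^ 2 = ‖f (x * y⁻¹)‖ ^ 2 * ‖θ y‖ ^ 2 := by
      intro y _
      rw [norm_mul, mul_pow]
    calc ‖∑ y ∈ s, f (x * y⁻¹) * θ y‖ ^ 2
        ≤ (∑ y ∈ s, ‖f (x * y⁻¹) * θ y‖) ^ 2 := pow_le_pow_left₀ (norm_nonneg _) step1 2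
      _ ≤ (s.card : ℝ) * ∑ y ∈ s, ‖f (x * y⁻¹) * θ y‖ ^ 2 := step2
      _ = (s.card : ℝ) * ∑ y ∈ s, ‖f (x * y⁻¹)‖ ^ 2 * ‖θ y‖ ^ 2 := by
          rw [Finset.sum_congr rfl step3]
  have hsum2 : Summable (fun x : G => (s.card : ℝ) * ∑ y ∈ s, ‖f (x * y⁻¹)‖ ^ 2 * ‖θ y‖ ^ 2) := by
    apply Summable.mul_left
    apply summable_sum
    intro y _
    have h1 : Summable (fun x : G => ‖f (x * y⁻¹)‖ ^ 2) :=
      (Equiv.mulRight y⁻¹).summable_iff.2 hf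
    exact h1.mul_right _
  exact Summable.of_nonneg_of_le (fun x => by positivity) hbound hsum2

end Aux

theorem weak_type_one_one_of_difference
    {G : Type*} [Group G] [Countable G] (γ : ℝ) (hγ : 0 < γ)
    (μ ν : ℕ → G → ℂ)
    (hμfin : ∀ k, (Function.support (μ k)).Finite)
    (hνfin : ∀ k, (Function.support (ν k)).Finite)
    (hνmax : ∃ C : ℝ, ∀ f : G → ℂ, Summable (fun x => ‖f x‖) → ∀ α : ℝ, 0 < α →
      ∃ hfin : {x : G | ∃ k : ℕ, α < ∑' y, ‖f (x * y⁻¹)‖ * ‖ν k y‖}.Finite,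
        (hfin.toFinset.card : ℝ) ≤ C * α⁻¹ * ∑' x, ‖f x‖)
    (hsupp : ∃ C : ℝ, ∀ k, ((hμfin k).toFinset.card : ℝ) ≤ C * (2 : ℝ) ^ ((k : ℝ) * γ))
    (hL2 : ∃ C : ℝ, ∀ k, ∀ f : G → ℂ, Summable (fun x => ‖f x‖ ^ 2) →
      Real.sqrt (∑' x, ‖∑' y, f (x * y⁻¹) * (μ k y - ν k y)‖ ^ 2)
        ≤ C * (2 : ℝ) ^ (-(k : ℝ) * γ / 2) * Real.sqrt (∑' x, ‖f x‖ ^ 2)) :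
    ∃ C' : ℝ, ∀ f : G → ℂ, Summable (fun x => ‖f x‖) → ∀ α : ℝ, 0 < α →
      ∃ hfin : {x : G | ∃ k : ℕ, α < ‖∑' y, f (x * y⁻¹) * μ k y‖}.Finite,
        (hfin.toFinset.card : ℝ) ≤ C' * α⁻¹ * ∑' x, ‖f x‖ := by
  classical
  obtain ⟨C₀, hC₀⟩ := hνmax
  obtain ⟨C₁, hC₁⟩ := hsupp
  obtain ⟨C₂, hC₂⟩ := hL2
  set q : ℝ := (2:ℝ) ^ (-γ) with hqdef
  set p : ℝ := (2:ℝ) ^ γ with hpdef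
  have hp1 : 1 < p := Real.one_lt_rpow_iff_of_pos two_pos |>.2 (Or.inl ⟨one_lt_two, hγ⟩)
  have hp0 : 0 < p := lt_trans one_pos hp1
  have hq0 : 0 < q := Real.rpow_pos_of_pos two_pos _
  have hq1 : q < 1 := by
    rw [hqdef]
    exact Real.rpow_lt_one_of_one_lt_of_neg one_lt_two (neg_neg_of_pos hγ)
  have hqinv : q = p⁻¹ := by
    rw [hqdef, hpdef, ← Real.rpow_neg (by norm_num : (0:ℝ) ≤ 2)]
  have hpk : ∀ k : ℕ, (2:ℝ) ^ ((k : ℝ) * γ) = p ^ k := by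
    intro k
    rw [hpdef, ← Real.rpow_natCast ((2:ℝ) ^ γ) k, ← Real.rpow_mul (by norm_num : (0:ℝ) ≤ 2),
      mul_comm]
  have hq2 : ∀ k : ℕ, ((2:ℝ) ^ (-(k : ℝ) * γ / 2)) ^ 2 = q ^ k := by
    intro k
    rw [sq, ← Real.rpow_add two_pos, hqdef, ← Real.rpow_natCast ((2:ℝ) ^ (-γ)) k,
      ← Real.rpow_mul (by norm_num : (0:ℝ) ≤ 2)]
    congr 1
    ring
  refine ⟨8 * |C₀| + |C₁| * p * (p - 1)⁻¹ + 32 * C₂ ^ 2 * (1 - q)⁻¹, ?_⟩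
  intro f hf α hα
  set F : ℝ := ∑' x, ‖f x‖ with hFdef
  have hF0 : 0 ≤ F := tsum_nonneg (fun _ => norm_nonneg _)
  -- good and bad parts
  set g : G → ℂ := fun z => if α < ‖f z‖ then 0 else f z with hgdef
  set b : G → ℂ := fun z => if α < ‖f z‖ then f z else 0 with hbdef
  have hgf : ∀ z, ‖g z‖ ≤ ‖f z‖ := by
    intro z; rw [hgdef]; dsimp only
    split_ifs <;> simp
  have hbfle : ∀ z, ‖b z‖ ≤ ‖f z‖ := by
    intro z; rw [hbdef]; dsimp only
    split_ifs <;> simp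
  have hgα : ∀ z, ‖g z‖ ≤ α := by
    intro z; rw [hgdef]; dsimp only
    split_ifs with h
    · simpa using hα.le
    · exact le_of_not_gt h
  have hfgb : ∀ z, f z = g z + b z := by
    intro z; rw [hgdef, hbdef]; dsimp only
    split_ifs <;> ring
  have hg1 : Summable (fun z => ‖g z‖) :=
    Summable.of_nonneg_of_le (fun _ => norm_nonneg _) hgf hf
  have hb1 : Summable (fun z => ‖b z‖) :=
    Summable.of_nonneg_of_le (fun _ => norm_nonneg _) hbfle hf
  have hg2 : Summable (fun z => ‖g z‖ ^ 2) := by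
    apply Summable.of_nonneg_of_le (fun z => by positivity)
      (fun z => ?_) (hf.mul_left α)
    calc ‖g z‖ ^ 2 = ‖g z‖ * ‖g z‖ := sq (‖g z‖) ▸ rfl
      _ ≤ α * ‖f z‖ := mul_le_mul (hgα z) (hgf z) (norm_nonneg _) hα.le
  have hgsq : (∑' z, ‖g z‖ ^ 2) ≤ α * F := by
    rw [hFdef, ← tsum_mul_left]
    apply Summable.tsum_le_tsum _ hg2 (hf.mul_left α)
    intro z
    calc ‖g z‖ ^ 2 = ‖g z‖ * ‖g z‖ := sq (‖g z‖) ▸ rfl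
      _ ≤ α * ‖f z‖ := mul_le_mul (hgα z) (hgf z) (norm_nonneg _) hα.le
  -- support of b is finite
  have hαf : {z : G | α < ‖f z‖}.Finite := by
    have h1 : ∀ᶠ z in Filter.cofinite, ‖f z‖ < α :=
      hf.tendsto_cofinite_zero.eventually_lt_const hα
    have h2 : {z : G | ¬ ‖f z‖ < α}.Finite := Filter.eventually_cofinite.1 h1
    exact h2.subset (fun z hz => not_lt_of_gt hz)
  set sb : Finset G := hαf.toFinset with hsbdef
  have hsb_mem : ∀ z, z ∈ sb ↔ α < ‖f z‖ := by
    intro z; rw [hsbdef, Set.Finite.mem_toFinset]; rfl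
  have hb0 : ∀ z, z ∉ sb → b z = 0 := by
    intro z hz
    rw [hbdef]; dsimp only
    rw [if_neg (fun hc => hz ((hsb_mem z).2 hc))]
  have hbz : ∀ z ∈ sb, α < ‖b z‖ := by
    intro z hz
    have h1 := (hsb_mem z).1 hz
    rw [hbdef]; dsimp only
    rw [if_pos h1]; exact h1
  have hbsum : ∑ z ∈ sb, ‖b z‖ ≤ F := by
    rw [hFdef]
    calc ∑ z ∈ sb, ‖b z‖ ≤ ∑ z ∈ sb, ‖f z‖ := Finset.sum_le_sum (fun z _ => hbfle z)
      _ ≤ ∑' z, ‖f z‖ := Summable.sum_le_tsum _ (fun _ _ => norm_nonneg _) hf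
  -- the stopping time K
  have hKex : ∀ z : G, ∃ k : ℕ, ‖b z‖ ≤ α * p ^ k := by
    intro z
    obtain ⟨n, hn⟩ := pow_unbounded_of_one_lt (‖b z‖ / α) hp1
    exact ⟨n, le_of_lt (by rwa [div_lt_iff₀ hα, mul_comm] at hn)⟩
  set K : G → ℕ := fun z => Nat.find (hKex z) with hKdef
  have hKspec : ∀ z, ‖b z‖ ≤ α * p ^ (K z) := fun z => Nat.find_spec (hKex z)
  have hKmin : ∀ z, ∀ k < K z, α * p ^ k < ‖b z‖ := by
    intro z k hk
    exact lt_of_not_ge (Nat.find_min (hKex z) hk)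
  -- split of b at scale k
  set bk : ℕ → G → ℂ := fun k z => if ‖b z‖ ≤ α * p ^ k then b z else 0 with hbkdef
  set Bk : ℕ → G → ℂ := fun k z => if ‖b z‖ ≤ α * p ^ k then 0 else b z with hBkdef
  have hbsplit : ∀ k z, b z = bk k z + Bk k z := by
    intro k z
    rw [hbkdef, hBkdef]; dsimp only
    split_ifs <;> ring
  have hsplit : ∀ k z, f z = g z + bk k z + Bk k z := by
    intro k z
    rw [add_assoc, ← hbsplit k z, hfgb z]
  have hbkb : ∀ k z, ‖bk k z‖ ≤ ‖b z‖ := by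
    intro k z
    rw [hbkdef]; dsimp only
    split_ifs <;> simp
  have hbk0 : ∀ k z, z ∉ sb → bk k z = 0 := by
    intro k z hz
    rw [hbkdef]; dsimp only
    rw [hb0 z hz]; simp
  have hbk2 : ∀ k, Summable (fun z => ‖bk k z‖ ^ 2) :=
    fun k => summable_of_ne_finset_zero (s := sb)
      (fun z hz => by rw [hbk0 k z hz]; simp)
  -- supports
  set sμ : ℕ → Finset G := fun k => (hμfin k).toFinset with hsμdef
  set sν : ℕ → Finset G := fun k => (hνfin k).toFinset with hsνdef
  set sk : ℕ → Finset G := fun k => sμ k ∪ sν k with hskdef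
  have hμ0 : ∀ k y, y ∉ sk k → μ k y = 0 := by
    intro k y hy
    by_contra hc
    exact hy (Finset.mem_union_left _ ((hμfin k).mem_toFinset.2 hc))
  have hν0 : ∀ k y, y ∉ sk k → ν k y = 0 := by
    intro k y hy
    by_contra hc
    exact hy (Finset.mem_union_right _ ((hνfin k).mem_toFinset.2 hc))
  -- the exceptional set E
  set E : Finset G := sb.biUnion (fun z => (Finset.range (K z)).biUnion
    (fun k => (sμ k).image (fun y => z * y))) with hEdef
  have hBk_zero : ∀ k x, x ∉ E → ∑ y ∈ sk k, Bk k (x * y⁻¹) * μ k y = 0 := by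
    intro k x hxE
    apply Finset.sum_eq_zero
    intro y _
    by_cases hμy : μ k y = 0
    · rw [hμy, mul_zero]
    by_cases hBz : Bk k (x * y⁻¹) = 0
    · rw [hBz, zero_mul]
    exfalso
    have hcond : ¬ (‖b (x * y⁻¹)‖ ≤ α * p ^ k) := by
      intro hc
      apply hBz
      rw [hBkdef]; dsimp only
      rw [if_pos hc]
    have hbne : b (x * y⁻¹) ≠ 0 := by
      intro hc
      apply hBz
      rw [hBkdef]; dsimp only
      rw [hc]; simp
    have hzsb : x * y⁻¹ ∈ sb := by
      by_contra hc
      exact hbne (hb0 _ hc)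
    have hkK : k < K (x * y⁻¹) := by
      by_contra hc
      push_neg at hc
      exact hcond (le_trans (hKspec _)
        (mul_le_mul_of_nonneg_left (pow_le_pow_right₀ hp1.le hc) hα.le))
    apply hxE
    rw [hEdef]
    apply Finset.mem_biUnion.2
    refine ⟨x * y⁻¹, hzsb, ?_⟩
    apply Finset.mem_biUnion.2
    refine ⟨k, Finset.mem_range.2 hkK, ?_⟩
    apply Finset.mem_image.2
    exact ⟨y, (hμfin k).mem_toFinset.2 hμy, inv_mul_cancel_right x y⟩
  -- decomposition of the convolution off E
  have hrepf : ∀ k x, (∑' y, f (x * y⁻¹) * μ k y) = ∑ y ∈ sk k, f (x * y⁻¹) * μ k y :=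
    fun k x => tsum_eq_sum (fun y hy => by rw [hμ0 k y hy, mul_zero])
  have hdec : ∀ k x, x ∉ E →
      (∑' y, f (x * y⁻¹) * μ k y)
        = (∑' y, g (x * y⁻¹) * ν k y) + (∑' y, g (x * y⁻¹) * (μ k y - ν k y))
          + (∑' y, bk k (x * y⁻¹) * ν k y)
          + (∑' y, bk k (x * y⁻¹) * (μ k y - ν k y)) := by
    intro k x hxE
    have e1 : (∑' y, g (x * y⁻¹) * ν k y) = ∑ y ∈ sk k, g (x * y⁻¹) * ν k y :=
      tsum_eq_sum (fun y hy => by rw [hν0 k y hy, mul_zero])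
    have e2 : (∑' y, g (x * y⁻¹) * (μ k y - ν k y))
        = ∑ y ∈ sk k, g (x * y⁻¹) * (μ k y - ν k y) :=
      tsum_eq_sum (fun y hy => by rw [hμ0 k y hy, hν0 k y hy, sub_zero, mul_zero])
    have e3 : (∑' y, bk k (x * y⁻¹) * ν k y) = ∑ y ∈ sk k, bk k (x * y⁻¹) * ν k y :=
      tsum_eq_sum (fun y hy => by rw [hν0 k y hy, mul_zero])
    have e4 : (∑' y, bk k (x * y⁻¹) * (μ k y - ν k y))
        = ∑ y ∈ sk k, bk k (x * y⁻¹) * (μ k y - ν k y) :=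
      tsum_eq_sum (fun y hy => by rw [hμ0 k y hy, hν0 k y hy, sub_zero, mul_zero])
    rw [hrepf, e1, e2, e3, e4]
    have e5 : ∀ y ∈ sk k, f (x * y⁻¹) * μ k y
        = g (x * y⁻¹) * ν k y + g (x * y⁻¹) * (μ k y - ν k y)
          + bk k (x * y⁻¹) * ν k y + bk k (x * y⁻¹) * (μ k y - ν k y)
          + Bk k (x * y⁻¹) * μ k y := by
      intro y _
      rw [hsplit k (x * y⁻¹)]
      ring
    rw [Finset.sum_congr rfl e5]
    rw [Finset.sum_add_distrib, Finset.sum_add_distrib, Finset.sum_add_distrib,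
      Finset.sum_add_distrib, hBk_zero k x hxE, add_zero]
  -- ν-maximal estimates for g and b
  obtain ⟨finA₁, cardA₁⟩ := hC₀ g hg1 (α/4) (by positivity)
  obtain ⟨finA₂, cardA₂⟩ := hC₀ b hb1 (α/4) (by positivity)
  -- L² estimate for the g-part
  have hθ0 : ∀ k, ∀ y ∉ sk k, μ k y - ν k y = 0 :=
    fun k y hy => by rw [hμ0 k y hy, hν0 k y hy, sub_zero]
  obtain ⟨Tgfin, hTgcard⟩ := level_set_card
    (fun k x => ∑' y, g (x * y⁻¹) * (μ k y - ν k y))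
    (fun k => C₂ ^ 2 * q ^ k * (α * F)) (C₂ ^ 2 * (α * F) * (1 - q)⁻¹) (α/4)
    (by positivity)
    (fun k => conv_sq_summable g hg2 _ (sk k) (hθ0 k))
    (fun k => by
      have h := hC₂ k g hg2
      have ha : (0:ℝ) ≤ ∑' x, ‖∑' y, g (x * y⁻¹) * (μ k y - ν k y)‖ ^ 2 :=
        tsum_nonneg (fun _ => by positivity)
      calc ∑' x, ‖∑' y, g (x * y⁻¹) * (μ k y - ν k y)‖ ^ 2
          = (Real.sqrt (∑' x, ‖∑' y, g (x * y⁻¹) * (μ k y - ν k y)‖ ^ 2)) ^ 2 :=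
            (Real.sq_sqrt ha).symm
        _ ≤ (C₂ * (2:ℝ) ^ (-(k : ℝ) * γ / 2) * Real.sqrt (∑' z, ‖g z‖ ^ 2)) ^ 2 :=
            pow_le_pow_left₀ (Real.sqrt_nonneg _) h 2
        _ = C₂ ^ 2 * ((2:ℝ) ^ (-(k : ℝ) * γ / 2)) ^ 2 * (Real.sqrt (∑' z, ‖g z‖ ^ 2)) ^ 2 := by
            ring
        _ = C₂ ^ 2 * q ^ k * (∑' z, ‖g z‖ ^ 2) := by
            rw [hq2 k, Real.sq_sqrt (tsum_nonneg (fun _ => by positivity))]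
        _ ≤ C₂ ^ 2 * q ^ k * (α * F) := by
            apply mul_le_mul_of_nonneg_left hgsq (by positivity))
    (fun Kf => by
      calc ∑ k ∈ Kf, C₂ ^ 2 * q ^ k * (α * F)
          = (∑ k ∈ Kf, q ^ k) * (C₂ ^ 2 * (α * F)) := by
            rw [Finset.sum_mul]
            exact Finset.sum_congr rfl (fun k _ => by ring)
        _ ≤ ((1:ℝ)⁻¹ * (1 - q)⁻¹) * (C₂ ^ 2 * (α * F)) := by
            apply mul_le_mul_of_nonneg_right
              (tail_geom_bound hq0 hq1 1 one_pos Kf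
                (fun k _ => by rw [inv_one]; exact pow_le_one₀ hq0.le hq1.le))
              (by positivity)
        _ = C₂ ^ 2 * (α * F) * (1 - q)⁻¹ := by ring)
  -- L² estimate for the bk-part
  obtain ⟨Tbfin, hTbcard⟩ := level_set_card
    (fun k x => ∑' y, bk k (x * y⁻¹) * (μ k y - ν k y))
    (fun k => C₂ ^ 2 * q ^ k * (∑ z ∈ sb, if ‖b z‖ ≤ α * p ^ k then ‖b z‖ ^ 2 else 0))
    (C₂ ^ 2 * (α * F) * (1 - q)⁻¹) (α/4)
    (by positivity)
    (fun k => conv_sq_summable (bk k) (hbk2 k) _ (sk k) (hθ0 k))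
    (fun k => by
      have h := hC₂ k (bk k) (hbk2 k)
      have ha : (0:ℝ) ≤ ∑' x, ‖∑' y, bk k (x * y⁻¹) * (μ k y - ν k y)‖ ^ 2 :=
        tsum_nonneg (fun _ => by positivity)
      have hbkrep : (∑' z, ‖bk k z‖ ^ 2)
          = ∑ z ∈ sb, (if ‖b z‖ ≤ α * p ^ k then ‖b z‖ ^ 2 else 0) := by
        rw [tsum_eq_sum (s := sb) (fun z hz => by rw [hbk0 k z hz]; simp)]
        refine Finset.sum_congr rfl (fun z _ => ?_)
        rw [hbkdef]; dsimp only
        split_ifs <;> simp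
      calc ∑' x, ‖∑' y, bk k (x * y⁻¹) * (μ k y - ν k y)‖ ^ 2
          = (Real.sqrt (∑' x, ‖∑' y, bk k (x * y⁻¹) * (μ k y - ν k y)‖ ^ 2)) ^ 2 :=
            (Real.sq_sqrt ha).symm
        _ ≤ (C₂ * (2:ℝ) ^ (-(k : ℝ) * γ / 2) * Real.sqrt (∑' z, ‖bk k z‖ ^ 2)) ^ 2 :=
            pow_le_pow_left₀ (Real.sqrt_nonneg _) h 2
        _ = C₂ ^ 2 * ((2:ℝ) ^ (-(k : ℝ) * γ / 2)) ^ 2 * (Real.sqrt (∑' z, ‖bk k z‖ ^ 2)) ^ 2 := by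
            ring
        _ = C₂ ^ 2 * q ^ k * (∑' z, ‖bk k z‖ ^ 2) := by
            rw [hq2 k, Real.sq_sqrt (tsum_nonneg (fun _ => by positivity))]
        _ = C₂ ^ 2 * q ^ k * (∑ z ∈ sb, if ‖b z‖ ≤ α * p ^ k then ‖b z‖ ^ 2 else 0) := by
            rw [hbkrep])
    (fun Kf => by
      have swap : ∑ k ∈ Kf, C₂ ^ 2 * q ^ k *
            (∑ z ∈ sb, if ‖b z‖ ≤ α * p ^ k then ‖b z‖ ^ 2 else 0)
          = ∑ z ∈ sb, ∑ k ∈ Kf, (if ‖b z‖ ≤ α * p ^ k then C₂ ^ 2 * (q ^ k * ‖b z‖ ^ 2) else 0) := by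
        rw [← Finset.sum_comm]
        refine Finset.sum_congr rfl (fun k _ => ?_)
        rw [Finset.mul_sum]
        exact Finset.sum_congr rfl (fun z _ => by split_ifs <;> ring)
      rw [swap]
      have hinner : ∀ z ∈ sb, (∑ k ∈ Kf, if ‖b z‖ ≤ α * p ^ k then C₂ ^ 2 * (q ^ k * ‖b z‖ ^ 2) else 0)
          ≤ C₂ ^ 2 * (1 - q)⁻¹ * (α * ‖b z‖) := by
        intro z hz
        have hz' : α < ‖b z‖ := hbz z hz
        have hbpos : (0:ℝ) < ‖b z‖ := lt_trans hα hz'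
        have e1 : (∑ k ∈ Kf, if ‖b z‖ ≤ α * p ^ k then C₂ ^ 2 * (q ^ k * ‖b z‖ ^ 2) else 0)
            = C₂ ^ 2 * ‖b z‖ ^ 2 * ∑ k ∈ Kf.filter (fun k => ‖b z‖ ≤ α * p ^ k), q ^ k := by
          rw [Finset.sum_filter, Finset.mul_sum]
          exact Finset.sum_congr rfl (fun k _ => by split_ifs <;> ring)
        rw [e1]
        have htail : ∑ k ∈ Kf.filter (fun k => ‖b z‖ ≤ α * p ^ k), q ^ k
            ≤ (‖b z‖ / α)⁻¹ * (1 - q)⁻¹ := by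
          apply tail_geom_bound hq0 hq1 (‖b z‖ / α) (div_pos hbpos hα)
          intro k hk
          have hc := (Finset.mem_filter.1 hk).2
          have hr : ‖b z‖ / α ≤ p ^ k := by
            rw [div_le_iff₀ hα, mul_comm]
            exact hc
          rw [hqinv, inv_pow]
          exact inv_anti₀ (div_pos hbpos hα) hr
        calc C₂ ^ 2 * ‖b z‖ ^ 2 * ∑ k ∈ Kf.filter (fun k => ‖b z‖ ≤ α * p ^ k), q ^ k
            ≤ C₂ ^ 2 * ‖b z‖ ^ 2 * ((‖b z‖ / α)⁻¹ * (1 - q)⁻¹) :=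
              mul_le_mul_of_nonneg_left htail (by positivity)
          _ = C₂ ^ 2 * (1 - q)⁻¹ * (α * ‖b z‖) := by
              rw [inv_div]
              have key : ‖b z‖ ^ 2 * (α / ‖b z‖) = α * ‖b z‖ := by
                rw [sq, div_eq_mul_inv,
                  show ‖b z‖ * ‖b z‖ * (α * ‖b z‖⁻¹) = ‖b z‖ * ‖b z‖⁻¹ * (α * ‖b z‖) by ring,
                  mul_inv_cancel₀ hbpos.ne', one_mul]
              calc C₂ ^ 2 * ‖b z‖ ^ 2 * (α / ‖b z‖ * (1 - q)⁻¹)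
                  = C₂ ^ 2 * (1 - q)⁻¹ * (‖b z‖ ^ 2 * (α / ‖b z‖)) := by ring
                _ = C₂ ^ 2 * (1 - q)⁻¹ * (α * ‖b z‖) := by rw [key]
      calc ∑ z ∈ sb, ∑ k ∈ Kf, (if ‖b z‖ ≤ α * p ^ k then C₂ ^ 2 * (q ^ k * ‖b z‖ ^ 2) else 0)
          ≤ ∑ z ∈ sb, C₂ ^ 2 * (1 - q)⁻¹ * (α * ‖b z‖) := Finset.sum_le_sum hinner
        _ = C₂ ^ 2 * (1 - q)⁻¹ * α * ∑ z ∈ sb, ‖b z‖ := by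
            rw [Finset.mul_sum]
            exact Finset.sum_congr rfl (fun z _ => by ring)
        _ ≤ C₂ ^ 2 * (1 - q)⁻¹ * α * F := by
            have hq1' : (0:ℝ) < 1 - q := by linarith
            exact mul_le_mul_of_nonneg_left hbsum
              (mul_nonneg (mul_nonneg (sq_nonneg C₂) (inv_nonneg.2 hq1'.le)) hα.le)
        _ = C₂ ^ 2 * (α * F) * (1 - q)⁻¹ := by ring)
  -- cardinality of the exceptional set E
  have hp1' : (0:ℝ) < p - 1 := by linarith
  have hEcard : (E.card : ℝ) ≤ |C₁| * p * (p - 1)⁻¹ * α⁻¹ * F := by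
    have h1 : (E.card : ℝ) ≤ ∑ z ∈ sb, ∑ k ∈ Finset.range (K z), ((sμ k).card : ℝ) := by
      have n3 : E.card ≤ ∑ z ∈ sb, ∑ k ∈ Finset.range (K z), (sμ k).card := by
        rw [hEdef]
        refine le_trans Finset.card_biUnion_le (Finset.sum_le_sum (fun z _ => ?_))
        refine le_trans Finset.card_biUnion_le (Finset.sum_le_sum (fun k _ => ?_))
        exact Finset.card_image_le
      calc (E.card : ℝ) ≤ ((∑ z ∈ sb, ∑ k ∈ Finset.range (K z), (sμ k).card : ℕ) : ℝ) :=
            Nat.cast_le.2 n3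
        _ = ∑ z ∈ sb, ∑ k ∈ Finset.range (K z), ((sμ k).card : ℝ) := by push_cast; rfl
    have h2 : ∀ z ∈ sb, ∑ k ∈ Finset.range (K z), ((sμ k).card : ℝ)
        ≤ |C₁| * p * (p - 1)⁻¹ * (α⁻¹ * ‖b z‖) := by
      intro z hz
      have hz' : α < ‖b z‖ := hbz z hz
      have step1 : ∑ k ∈ Finset.range (K z), ((sμ k).card : ℝ)
          ≤ ∑ k ∈ Finset.range (K z), |C₁| * p ^ k := by
        apply Finset.sum_le_sum
        intro k _
        calc ((sμ k).card : ℝ) ≤ C₁ * (2:ℝ) ^ ((k:ℝ) * γ) := hC₁ k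
          _ = C₁ * p ^ k := by rw [hpk]
          _ ≤ |C₁| * p ^ k := mul_le_mul_of_nonneg_right (le_abs_self _) (by positivity)
      have hgeom : ∑ k ∈ Finset.range (K z), p ^ k = (p ^ (K z) - 1) / (p - 1) :=
        geom_sum_eq hp1.ne' _
      have hpK : p ^ (K z) ≤ p * (‖b z‖ / α) := by
        rcases Nat.eq_zero_or_pos (K z) with h0 | hpos
        · rw [h0, pow_zero]
          have hd : 1 < ‖b z‖ / α := (one_lt_div hα).2 hz'
          nlinarith
        · have hKm := hKmin z (K z - 1) (Nat.sub_lt hpos one_pos)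
          have he : p ^ (K z) = p * p ^ (K z - 1) := by
            conv_lhs => rw [show K z = (K z - 1) + 1 from (Nat.succ_pred_eq_of_pos hpos).symm]
            rw [pow_succ, mul_comm]
          rw [he]
          apply mul_le_mul_of_nonneg_left _ hp0.le
          rw [le_div_iff₀ hα]
          nlinarith [hKm]
      calc ∑ k ∈ Finset.range (K z), ((sμ k).card : ℝ)
          ≤ ∑ k ∈ Finset.range (K z), |C₁| * p ^ k := step1
        _ = |C₁| * ((p ^ (K z) - 1) / (p - 1)) := by rw [← Finset.mul_sum, hgeom]
        _ ≤ |C₁| * ((p * (‖b z‖ / α)) / (p - 1)) := by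
            apply mul_le_mul_of_nonneg_left _ (abs_nonneg _)
            exact (div_le_div_iff_of_pos_right hp1').2 (by linarith)
        _ = |C₁| * p * (p - 1)⁻¹ * (α⁻¹ * ‖b z‖) := by
            rw [div_eq_mul_inv (p * (‖b z‖ / α)), div_eq_mul_inv (‖b z‖)]
            ring
    calc (E.card : ℝ) ≤ ∑ z ∈ sb, ∑ k ∈ Finset.range (K z), ((sμ k).card : ℝ) := h1
      _ ≤ ∑ z ∈ sb, |C₁| * p * (p - 1)⁻¹ * (α⁻¹ * ‖b z‖) := Finset.sum_le_sum h2
      _ = |C₁| * p * (p - 1)⁻¹ * α⁻¹ * ∑ z ∈ sb, ‖b z‖ := by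
          rw [Finset.mul_sum]
          exact Finset.sum_congr rfl (fun z _ => by ring)
      _ ≤ |C₁| * p * (p - 1)⁻¹ * α⁻¹ * F := by
          apply mul_le_mul_of_nonneg_left hbsum
          exact mul_nonneg (mul_nonneg (mul_nonneg (abs_nonneg _) hp0.le)
            (inv_nonneg.2 hp1'.le)) (inv_nonneg.2 hα.le)
  -- inclusion of the level set in the five exceptional sets
  have hincl : {x : G | ∃ k : ℕ, α < ‖∑' y, f (x * y⁻¹) * μ k y‖} ⊆
      (↑E : Set G)
        ∪ {x : G | ∃ k : ℕ, α / 4 < ∑' y, ‖g (x * y⁻¹)‖ * ‖ν k y‖}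
        ∪ {x : G | ∃ k : ℕ, α / 4 < ∑' y, ‖b (x * y⁻¹)‖ * ‖ν k y‖}
        ∪ {x : G | ∃ k : ℕ, α / 4 < ‖∑' y, g (x * y⁻¹) * (μ k y - ν k y)‖}
        ∪ {x : G | ∃ k : ℕ, α / 4 < ‖∑' y, bk k (x * y⁻¹) * (μ k y - ν k y)‖} := by
    intro x hx
    obtain ⟨k, hk⟩ := hx
    by_cases hxE : x ∈ E
    · exact Or.inl (Or.inl (Or.inl (Or.inl hxE)))
    rw [hdec k x hxE] at hk
    have hnorm : α < ‖∑' y, g (x * y⁻¹) * ν k y‖ + ‖∑' y, g (x * y⁻¹) * (μ k y - ν k y)‖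
        + ‖∑' y, bk k (x * y⁻¹) * ν k y‖ + ‖∑' y, bk k (x * y⁻¹) * (μ k y - ν k y)‖ := by
      refine lt_of_lt_of_le hk ?_
      exact le_trans (norm_add_le _ _) (add_le_add
        (le_trans (norm_add_le _ _) (add_le_add (norm_add_le _ _) le_rfl)) le_rfl)
    have hor : α / 4 < ‖∑' y, g (x * y⁻¹) * ν k y‖
        ∨ α / 4 < ‖∑' y, g (x * y⁻¹) * (μ k y - ν k y)‖
        ∨ α / 4 < ‖∑' y, bk k (x * y⁻¹) * ν k y‖
        ∨ α / 4 < ‖∑' y, bk k (x * y⁻¹) * (μ k y - ν k y)‖ := by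
      by_contra hcon
      push_neg at hcon
      obtain ⟨e1, e2, e3, e4⟩ := hcon
      linarith
    rcases hor with h1 | h2 | h3 | h4
    · refine Or.inl (Or.inl (Or.inl (Or.inr ⟨k, ?_⟩)))
      have hs1 : Summable (fun y => ‖g (x * y⁻¹) * ν k y‖) :=
        summable_of_ne_finset_zero (s := sk k)
          (fun y hy => by rw [hν0 k y hy, mul_zero, norm_zero])
      calc α / 4 < ‖∑' y, g (x * y⁻¹) * ν k y‖ := h1
        _ ≤ ∑' y, ‖g (x * y⁻¹) * ν k y‖ := norm_tsum_le_tsum_norm hs1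
        _ = ∑' y, ‖g (x * y⁻¹)‖ * ‖ν k y‖ := tsum_congr (fun y => norm_mul _ _)
    · exact Or.inl (Or.inr ⟨k, h2⟩)
    · refine Or.inl (Or.inl (Or.inr ⟨k, ?_⟩))
      have hs3 : Summable (fun y => ‖bk k (x * y⁻¹) * ν k y‖) :=
        summable_of_ne_finset_zero (s := sk k)
          (fun y hy => by rw [hν0 k y hy, mul_zero, norm_zero])
      have hs3' : Summable (fun y => ‖bk k (x * y⁻¹)‖ * ‖ν k y‖) :=
        summable_of_ne_finset_zero (s := sk k)
          (fun y hy => by rw [hν0 k y hy, norm_zero, mul_zero])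
      have hs3b : Summable (fun y => ‖b (x * y⁻¹)‖ * ‖ν k y‖) :=
        summable_of_ne_finset_zero (s := sk k)
          (fun y hy => by rw [hν0 k y hy, norm_zero, mul_zero])
      calc α / 4 < ‖∑' y, bk k (x * y⁻¹) * ν k y‖ := h3
        _ ≤ ∑' y, ‖bk k (x * y⁻¹) * ν k y‖ := norm_tsum_le_tsum_norm hs3
        _ = ∑' y, ‖bk k (x * y⁻¹)‖ * ‖ν k y‖ := tsum_congr (fun y => norm_mul _ _)
        _ ≤ ∑' y, ‖b (x * y⁻¹)‖ * ‖ν k y‖ :=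
            Summable.tsum_le_tsum (fun y => mul_le_mul_of_nonneg_right (hbkb k _) (norm_nonneg _))
              hs3' hs3b
    · exact Or.inr ⟨k, h4⟩
  have hSfin : {x : G | ∃ k : ℕ, α < ‖∑' y, f (x * y⁻¹) * μ k y‖}.Finite :=
    ((((E.finite_toSet.union finA₁).union finA₂).union Tgfin).union Tbfin).subset hincl
  refine ⟨hSfin, ?_⟩
  -- finset inclusion and cardinality count
  have hsubF : hSfin.toFinset ⊆
      (((E ∪ finA₁.toFinset) ∪ finA₂.toFinset) ∪ Tgfin.toFinset) ∪ Tbfin.toFinset := by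
    intro x hx
    rw [Set.Finite.mem_toFinset] at hx
    have h := hincl hx
    simp only [Set.mem_union, Finset.mem_coe] at h
    simp only [Finset.mem_union, Set.Finite.mem_toFinset]
    exact h
  have hcard1 : hSfin.toFinset.card ≤ E.card + finA₁.toFinset.card + finA₂.toFinset.card
      + Tgfin.toFinset.card + Tbfin.toFinset.card := by
    calc hSfin.toFinset.card
        ≤ ((((E ∪ finA₁.toFinset) ∪ finA₂.toFinset) ∪ Tgfin.toFinset) ∪ Tbfin.toFinset).card :=
          Finset.card_le_card hsubF
      _ ≤ (((E ∪ finA₁.toFinset) ∪ finA₂.toFinset) ∪ Tgfin.toFinset).card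
          + Tbfin.toFinset.card := Finset.card_union_le _ _
      _ ≤ ((E ∪ finA₁.toFinset) ∪ finA₂.toFinset).card + Tgfin.toFinset.card
          + Tbfin.toFinset.card := add_le_add_left (Finset.card_union_le _ _) _
      _ ≤ (E ∪ finA₁.toFinset).card + finA₂.toFinset.card + Tgfin.toFinset.card
          + Tbfin.toFinset.card :=
          add_le_add_left (add_le_add_left (Finset.card_union_le _ _) _) _
      _ ≤ E.card + finA₁.toFinset.card + finA₂.toFinset.card + Tgfin.toFinset.card
          + Tbfin.toFinset.card :=
          add_le_add_left (add_le_add_left (add_le_add_left (Finset.card_union_le _ _) _) _) _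
  -- real bounds for each piece
  have hg1F : (∑' x, ‖g x‖) ≤ F := Summable.tsum_le_tsum hgf hg1 hf
  have hb1F : (∑' x, ‖b x‖) ≤ F := Summable.tsum_le_tsum hbfle hb1 hf
  have hq1' : (0:ℝ) < 1 - q := by linarith
  have hquarter : ((α/4)⁻¹ : ℝ) = 4 * α⁻¹ := by
    rw [inv_div, div_eq_mul_inv]
  have hA₁ : (finA₁.toFinset.card : ℝ) ≤ 4 * |C₀| * α⁻¹ * F := by
    calc (finA₁.toFinset.card : ℝ) ≤ C₀ * (α/4)⁻¹ * ∑' x, ‖g x‖ := cardA₁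
      _ ≤ |C₀| * (α/4)⁻¹ * ∑' x, ‖g x‖ := by
          apply mul_le_mul_of_nonneg_right _ (tsum_nonneg (fun _ => norm_nonneg _))
          exact mul_le_mul_of_nonneg_right (le_abs_self _) (inv_nonneg.2 (by positivity))
      _ ≤ |C₀| * (α/4)⁻¹ * F := mul_le_mul_of_nonneg_left hg1F (by positivity)
      _ = 4 * |C₀| * α⁻¹ * F := by rw [hquarter]; ring
  have hA₂ : (finA₂.toFinset.card : ℝ) ≤ 4 * |C₀| * α⁻¹ * F := by
    calc (finA₂.toFinset.card : ℝ) ≤ C₀ * (α/4)⁻¹ * ∑' x, ‖b x‖ := cardA₂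
      _ ≤ |C₀| * (α/4)⁻¹ * ∑' x, ‖b x‖ := by
          apply mul_le_mul_of_nonneg_right _ (tsum_nonneg (fun _ => norm_nonneg _))
          exact mul_le_mul_of_nonneg_right (le_abs_self _) (inv_nonneg.2 (by positivity))
      _ ≤ |C₀| * (α/4)⁻¹ * F := mul_le_mul_of_nonneg_left hb1F (by positivity)
      _ = 4 * |C₀| * α⁻¹ * F := by rw [hquarter]; ring
  have hMval : C₂ ^ 2 * (α * F) * (1 - q)⁻¹ / (α/4) ^ 2 = 16 * C₂ ^ 2 * (1 - q)⁻¹ * α⁻¹ * F := by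
    field_simp
    ring
  have hTg : (Tgfin.toFinset.card : ℝ) ≤ 16 * C₂ ^ 2 * (1 - q)⁻¹ * α⁻¹ * F := by
    refine le_trans hTgcard ?_
    rw [hMval]
  have hTb : (Tbfin.toFinset.card : ℝ) ≤ 16 * C₂ ^ 2 * (1 - q)⁻¹ * α⁻¹ * F := by
    refine le_trans hTbcard ?_
    rw [hMval]
  calc (hSfin.toFinset.card : ℝ)
      ≤ (E.card : ℝ) + finA₁.toFinset.card + finA₂.toFinset.card + Tgfin.toFinset.card
        + Tbfin.toFinset.card := by exact_mod_cast hcard1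
    _ ≤ (|C₁| * p * (p - 1)⁻¹ * α⁻¹ * F) + (4 * |C₀| * α⁻¹ * F) + (4 * |C₀| * α⁻¹ * F)
        + (16 * C₂ ^ 2 * (1 - q)⁻¹ * α⁻¹ * F) + (16 * C₂ ^ 2 * (1 - q)⁻¹ * α⁻¹ * F) := by
        exact add_le_add (add_le_add (add_le_add (add_le_add hEcard hA₁) hA₂) hTg) hTb
    _ = (8 * |C₀| + |C₁| * p * (p - 1)⁻¹ + 32 * C₂ ^ 2 * (1 - q)⁻¹) * α⁻¹ * F := by ring
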